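/- Let R be an associative ring with ℤ-basis {t_w}_{w∈W} (W a finite set with involution w ↦ w⁻¹) and non-negative integer structure constants γ_{x,y,z} given by t_x t_y = Σ_z γ_{x,y,z⁻¹} t_z. Let d be a basis element with t_d t_d = t_d which is a left identity for t_y (t_d t_y = t_y) and a right identity for t_{y⁻¹} (t_{y⁻¹} t_d = t_{y⁻¹}). If t_{y⁻¹} t_y = t_{d'} for some idempotent basis element t_{d'} which is a right identity for t_y and left identity for t_{y⁻¹}, then t_y t_{y⁻¹} = t_d. -/

import Mathlib

lemma repr_mul_nonneg {R I : Type*} [NonUnitalRing R] (b : Module.Basis I ℤ R)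
    (hpos : ∀ u v w : I, 0 ≤ b.repr (b u * b v) w)
    (a c : R) (ha : ∀ w, 0 ≤ b.repr a w) (hc : ∀ w, 0 ≤ b.repr c w) (w : I) :
    0 ≤ b.repr (a * c) w := by
  have ha' : a = (b.repr a).sum fun i r => r • b i := (b.linearCombination_repr a).symm
  have hc' : c = (b.repr c).sum fun i r => r • b i := (b.linearCombination_repr c).symm
  rw [ha', hc', Finsupp.sum_mul]
  rw [map_finsuppSum, Finsupp.sum_apply]
  refine Finset.sum_nonneg fun u _ => ?_
  dsimp only
  rw [Finsupp.mul_sum, map_finsuppSum, Finsupp.sum_apply]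
  refine Finset.sum_nonneg fun v _ => ?_
  dsimp only
  have : (b.repr a u • b u) * (b.repr c v • b v)
      = (b.repr a u * b.repr c v) • (b u * b v) := by
    rw [smul_mul_smul_comm]
  rw [this, map_smul, Finsupp.smul_apply, smul_eq_mul]
  exact mul_nonneg (mul_nonneg (ha u) (hc v)) (hpos u v w)

/-- Abstracting the asymptotic ring of a finite Weyl group: a ring free
on a basis with non-negative integer structure constants, with `t d`
idempotent, a left identity for `t y` and right identity for `t yi`
(`yi = y⁻¹`), and `t yi * t y = t d'` an idempotent basis element which
is a right identity for `t y` and a left identity for `t yi`.  If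
moreover `t y * t yi = t d + x` with `x` a non-negative combination
satisfying `t d * x = x * t d = x`, then `t y * t yi = t d`. -/
theorem stmt_11 {R I : Type*} [NonUnitalRing R] (b : Module.Basis I ℤ R)
    (hpos : ∀ u v w : I, 0 ≤ b.repr (b u * b v) w)
    (y yi d d' : I)
    (hdd : b d * b d = b d)
    (hdy : b d * b y = b y) (hyid : b yi * b d = b yi)
    (hyy : b yi * b y = b d')
    (hd'd' : b d' * b d' = b d')
    (hyd' : b y * b d' = b y) (hd'yi : b d' * b yi = b yi)
    (x : R) (hyx : b y * b yi = b d + x)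
    (hx : ∀ w : I, 0 ≤ b.repr x w)
    (h1 : b d * x = x) (h2 : x * b d = x) :
    b y * b yi = b d := by
  have hid : (b y * b yi) * (b y * b yi) = b y * b yi := by
    calc (b y * b yi) * (b y * b yi) = b y * ((b yi * b y) * b yi) := by
          rw [mul_assoc, mul_assoc]
      _ = b y * b yi := by rw [hyy, hd'yi]
  rw [hyx] at hid
  have key : x + x * x = 0 := by
    have h := hid
    rw [mul_add, add_mul, add_mul, hdd, h1, h2] at h
    have h3 : (b d + x) + (x + x * x) = (b d + x) + 0 := by
      rw [add_zero]; exact h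
    exact add_left_cancel h3
  have hz : ∀ w, b.repr x w = 0 := by
    intro w
    have h4 : b.repr x w + b.repr (x*x) w = 0 := by
      have := congrArg (fun r => b.repr r w) key
      simpa [map_add] using this
    have := repr_mul_nonneg b hpos x x hx hx w
    linarith [hx w]
  have : x = 0 := by
    apply b.repr.injective
    ext w
    simp [hz w]
  rw [hyx, this, add_zero]
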